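/- Let X : Ω → ℝ^k and N : Ω → ℝ be independent random variables, with N integrable, and let f : ℝ^k → ℝ be Borel measurable with f(X) integrable. Set Y := f(X) + N and R := Y − E[Y | σ(X)]. Then for every Borel measurable ψ : ℝ → ℝ such that ψ(N) is square-integrable, E[ψ(N) | σ(R)] = ψ(N) almost surely; consequently E[(ψ(N) − E[ψ(N) | σ(R)])²] = 0. -/

import Mathlib

open MeasureTheory ProbabilityTheory

/-- In an additive noise model `Y = f(X) + N` with `X ⟂ N`, any square-integrable
function `ψ(N)` of the noise is perfectly predictable from the regression residual
`R = Y - E[Y | σ(X)]`: `E[ψ(N) | σ(R)] = ψ(N)` a.s., and the mean-squared error vanishes. -/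
theorem stmt_8
    {Ω : Type*} {mΩ : MeasurableSpace Ω}
    (μ : Measure Ω) [IsProbabilityMeasure μ]
    (k : ℕ)
    (X : Ω → (Fin k → ℝ)) (N : Ω → ℝ)
    (hX : Measurable X) (hN : Measurable N)
    (hindep : IndepFun X N μ)
    (hNint : Integrable N μ)
    (f : (Fin k → ℝ) → ℝ) (hf : Measurable f)
    (hfint : Integrable (fun ω => f (X ω)) μ)
    (Y : Ω → ℝ) (hY : Y = fun ω => f (X ω) + N ω)
    (R : Ω → ℝ)
    (hR : R = fun ω => Y ω - (μ[Y | MeasurableSpace.comap X inferInstance]) ω) :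
    ∀ ψ : ℝ → ℝ, Measurable ψ → MemLp (fun ω => ψ (N ω)) 2 μ →
      (μ[fun ω => ψ (N ω) | MeasurableSpace.comap R inferInstance]
          =ᵐ[μ] fun ω => ψ (N ω))
      ∧ ∫ ω, (ψ (N ω)
          - (μ[fun ω => ψ (N ω) | MeasurableSpace.comap R inferInstance]) ω) ^ 2 ∂μ = 0 := by
  set mX : MeasurableSpace Ω := MeasurableSpace.comap X inferInstance with hmX
  have hmXle : mX ≤ mΩ := hX.comap_le
  -- independence of σ-algebras
  have hIndep : Indep mX (MeasurableSpace.comap N inferInstance) μ :=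
    (IndepFun_iff_Indep X N μ).mp hindep
  -- E[Y | σ(X)] = f(X) + E[N]
  have hfX_sm : StronglyMeasurable[mX] (fun ω => f (X ω)) :=
    ((hf.comp (comap_measurable X)).stronglyMeasurable)
  have hEN : μ[N | mX] =ᵐ[μ] fun _ => ∫ ω, N ω ∂μ :=
    condExp_indep_eq hN.comap_le hmXle
      (stronglyMeasurable_id.comp_measurable (comap_measurable N)) hIndep.symm
  have hEY : μ[Y | mX] =ᵐ[μ] fun ω => f (X ω) + ∫ ω, N ω ∂μ := by
    rw [hY]
    calc μ[fun ω => f (X ω) + N ω | mX]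
        =ᵐ[μ] μ[fun ω => f (X ω) | mX] + μ[N | mX] := condExp_add hfint hNint mX
      _ =ᵐ[μ] (fun ω => f (X ω)) + fun _ => ∫ ω, N ω ∂μ := by
          exact Filter.EventuallyEq.add
            (Filter.EventuallyEq.of_eq (condExp_of_stronglyMeasurable hmXle hfX_sm hfint)) hEN
      _ = fun ω => f (X ω) + ∫ ω, N ω ∂μ := rfl
  -- hence R = N - E[N] a.e.
  have hRN : R =ᵐ[μ] fun ω => N ω - ∫ ω, N ω ∂μ := by
    rw [hR, hY]
    filter_upwards [hEY] with ω hω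
    simp [hY] at hω ⊢
    rw [hω]; ring
  intro ψ hψ hψL2
  set mR : MeasurableSpace Ω := MeasurableSpace.comap R inferInstance with hmR
  have hRmeas : @Measurable Ω ℝ mΩ _ R := by
    rw [hR]
    rw [hY]
    exact ((hf.comp hX).add hN).sub (stronglyMeasurable_condExp.mono hmXle).measurable
  have hmRle : mR ≤ mΩ := measurable_iff_comap_le.mp hRmeas
  -- g ∘ R is σ(R)-measurable and a.e. equal to ψ ∘ N
  set g : ℝ → ℝ := fun r => ψ (r + ∫ ω, N ω ∂μ) with hg
  have hgmeas : Measurable g := hψ.comp (measurable_add_const _)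
  have hgR_sm : StronglyMeasurable[mR] (fun ω => g (R ω)) :=
    (hgmeas.comp (comap_measurable R)).stronglyMeasurable
  have haeeq : (fun ω => ψ (N ω)) =ᵐ[μ] fun ω => g (R ω) := by
    filter_upwards [hRN] with ω hω
    simp [hg, hω]
  have hψint : Integrable (fun ω => ψ (N ω)) μ :=
    hψL2.integrable (by norm_num)
  have hgRint : Integrable (fun ω => g (R ω)) μ := hψint.congr haeeq
  have hmain : μ[fun ω => ψ (N ω) | mR] =ᵐ[μ] fun ω => ψ (N ω) := by
    calc μ[fun ω => ψ (N ω) | mR]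
        =ᵐ[μ] μ[fun ω => g (R ω) | mR] := condExp_congr_ae haeeq
      _ =ᵐ[μ] fun ω => g (R ω) :=
          (condExp_of_stronglyMeasurable hmRle hgR_sm hgRint).eventuallyEq
      _ =ᵐ[μ] fun ω => ψ (N ω) := haeeq.symm
  refine ⟨hmain, ?_⟩
  have : (fun ω => (ψ (N ω) - (μ[fun ω => ψ (N ω) | mR]) ω) ^ 2) =ᵐ[μ] fun _ => (0 : ℝ) := by
    filter_upwards [hmain] with ω hω
    simp [hω]
  rw [integral_congr_ae this, integral_zero]
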